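/- arXiv:0811.4101 — 4 statements merged into one kernel-verified Lean document; each statement's English description precedes it below -/
import Mathlib

section
/- Let G be a compactly generated totally disconnected locally compact Hausdorff group all of whose discrete quotients are finite (i.e. for every closed normal subgroup N with G/N discrete, G/N is finite). Then the discrete residual Res(G) is cocompact in G and admits no non-trivial discrete quotient and no non-trivial compact quotient: for every proper closed normal subgroup N of Res(G), the quotient Res(G)/N is neither discrete nor compact unless it is trivial. -/
open scoped Pointwise Topology

/-- A topological group is *compactly generated* if it is generated, as a group,
by some compact subset. -/
def CompactlyGeneratedGroup (G : Type*) [Group G] [TopologicalSpace G] : Prop :=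
  ∃ S : Set G, IsCompact S ∧ Subgroup.closure S = ⊤

/-- A topological group is *topologically simple* if it is non-trivial and its only
closed normal subgroups are the trivial subgroup and the whole group. -/
def IsTopologicallySimple (G : Type*) [Group G] [TopologicalSpace G] : Prop :=
  Nontrivial G ∧ ∀ H : Subgroup G, H.Normal → IsClosed (H : Set G) → H = ⊥ ∨ H = ⊤

/-- Two topological groups are *topologically isomorphic* if there is a group
isomorphism between them which is also a homeomorphism. -/
def TopIsomorphic (G H : Type*) [Group G] [TopologicalSpace G] [Group H]
    [TopologicalSpace H] : Prop :=
  ∃ e : G ≃* H, Continuous e ∧ Continuous e.symm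

/-- `G` is a quasi-product with quasi-factors `N 0, …, N (p-1)` if these are closed
normal subgroups of `G` such that the multiplication map `N 0 × ⋯ × N (p-1) → G`
is injective with dense image. -/
def IsQuasiProduct {G : Type*} [Group G] [TopologicalSpace G] {p : ℕ}
    (N : Fin p → Subgroup G) : Prop :=
  (∀ i, (N i).Normal) ∧ (∀ i, IsClosed ((N i) : Set G)) ∧
  Function.Injective (fun x : (∀ i, ↥(N i)) => (List.ofFn fun i => (x i : G)).prod) ∧
  DenseRange (fun x : (∀ i, ↥(N i)) => (List.ofFn fun i => (x i : G)).prod)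

section CMhelpers

variable {G : Type*} [Group G] [TopologicalSpace G] [IsTopologicalGroup G]

/-- **van Dantzig's theorem**, neighbourhood-basis version: in a locally compact
totally disconnected Hausdorff group, every open neighbourhood of the identity contains
a compact open subgroup. -/
theorem CM.exists_compact_open_subgroup [LocallyCompactSpace G] [T2Space G]
    [TotallyDisconnectedSpace G] {Ω : Set G} (hΩo : IsOpen Ω) (hΩ1 : (1 : G) ∈ Ω) :
    ∃ U : Subgroup G, IsCompact (U : Set G) ∧ IsOpen (U : Set G) ∧ (U : Set G) ⊆ Ω := by
  obtain ⟨C, hCc, hCn⟩ := exists_compact_mem_nhds (1 : G)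
  have h1 : (1 : G) ∈ interior C ∩ Ω := ⟨mem_interior_iff_mem_nhds.2 hCn, hΩ1⟩
  obtain ⟨W, hWclopen, hW1, hWsub⟩ :=
    loc_compact_Haus_tot_disc_of_zero_dim.exists_subset_of_mem_open h1
      (isOpen_interior.inter hΩo)
  have hWc : IsCompact W :=
    hCc.of_isClosed_subset hWclopen.1 (fun x hx => interior_subset (hWsub hx).1)
  obtain ⟨V, hVn, hWV⟩ := compact_open_separated_mul_right hWc hWclopen.2 subset_rfl
  set V1 : Set G := interior V ∩ (interior V)⁻¹ with hV1def
  have hV1o : IsOpen V1 := isOpen_interior.inter isOpen_interior.inv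
  have h1iV : (1 : G) ∈ interior V := mem_interior_iff_mem_nhds.2 hVn
  have hV11 : (1 : G) ∈ V1 := ⟨h1iV, by simpa using h1iV⟩
  have hV1symm : V1⁻¹ = V1 := by
    ext x
    simp only [hV1def, Set.mem_inter_iff, Set.mem_inv, inv_inv]
    exact and_comm
  have hV1V : V1 ⊆ V := fun x hx => interior_subset hx.1
  -- every product of elements of `V1` lies in `W`
  have key : ∀ l : List G, (∀ y ∈ l, y ∈ V1) → ∀ w ∈ W, w * l.prod ∈ W := by
    intro l
    induction l with
    | nil => intro _ w hw; simpa using hw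
    | cons a t ih =>
      intro h w hw
      have hwa : w * a ∈ W := hWV (Set.mul_mem_mul hw (hV1V (h a List.mem_cons_self)))
      have := ih (fun y hy => h y (List.mem_cons_of_mem a hy)) (w * a) hwa
      simpa [List.prod_cons, mul_assoc] using this
  have hsubW : (Subgroup.closure V1 : Set G) ⊆ W := by
    intro x hx
    have hx' : x ∈ (Subgroup.closure V1).toSubmonoid := hx
    rw [Subgroup.closure_toSubmonoid, hV1symm, Set.union_self] at hx'
    obtain ⟨l, hl, rfl⟩ := Submonoid.exists_list_of_mem_closure hx'
    simpa using key l hl 1 hW1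
  have hUopen : IsOpen ((Subgroup.closure V1 : Subgroup G) : Set G) := by
    refine Subgroup.isOpen_of_mem_nhds _ (Filter.mem_of_superset (hV1o.mem_nhds hV11) ?_)
    exact Subgroup.subset_closure
  refine ⟨Subgroup.closure V1, ?_, hUopen, fun x hx => (hWsub (hsubW hx)).2⟩
  exact hWc.of_isClosed_subset (Subgroup.isClosed_of_isOpen _ hUopen) hsubW

/-- The workhorse lemma.  Let `G` be a compactly generated topological group all of whose
discrete quotients are finite, `R` its discrete residual.  If `S ≤ R` is a normal subgroup
of `G` such that `U ∩ R ⊆ S` for some compact open subgroup `U` of `G`, then `G/S` is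
compact and `R = S`. -/
theorem CM.lemmaW
    (hcg : CompactlyGeneratedGroup G)
    (hfin : ∀ N : Subgroup G, N.Normal → IsClosed (N : Set G) →
      DiscreteTopology (G ⧸ N) → Finite (G ⧸ N))
    (R : Subgroup G)
    (hR : R = sInf {N : Subgroup G | N.Normal ∧ IsOpen (N : Set G)})
    (S : Subgroup G) (hSN : S.Normal) (hSR : S ≤ R)
    (U : Subgroup G) (hUc : IsCompact (U : Set G)) (hUo : IsOpen (U : Set G))
    (hUR : (U : Set G) ∩ (R : Set G) ⊆ (S : Set G)) :
    CompactSpace (G ⧸ S) ∧ R ≤ S := by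
  haveI := hSN
  have hRle : ∀ N : Subgroup G, N.Normal → IsOpen (N : Set G) → R ≤ N := by
    intro N h1 h2; rw [hR]; exact sInf_le ⟨h1, h2⟩
  have hπopen : IsOpenMap (QuotientGroup.mk : G → G ⧸ S) := QuotientGroup.isOpenMap_coe
  have hπcont : Continuous (QuotientGroup.mk : G → G ⧸ S) := continuous_quot_mk
  have hπsurj : Function.Surjective (QuotientGroup.mk' S) := QuotientGroup.mk'_surjective S
  set Ubar : Subgroup (G ⧸ S) := U.map (QuotientGroup.mk' S) with hUbar_def
  have hUbar_coe : (Ubar : Set (G ⧸ S)) = QuotientGroup.mk '' (U : Set G) := rfl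
  have hUbar_o : IsOpen (Ubar : Set (G ⧸ S)) := by
    rw [hUbar_coe]; exact hπopen _ hUo
  have hUbar_c : IsCompact (Ubar : Set (G ⧸ S)) := by
    rw [hUbar_coe]; exact hUc.image hπcont
  -- a compact symmetric generating set containing U
  obtain ⟨C, hCc, hCgen⟩ := hcg
  set B : Set G := (U : Set G) ∪ (C ∪ C⁻¹) with hBdef
  have hBc : IsCompact B := hUc.union (hCc.union hCc.inv)
  have hBgen : Subgroup.closure B = ⊤ := by
    have hsub : C ⊆ B := fun x hx => Or.inr (Or.inl hx)
    exact top_unique (hCgen ▸ Subgroup.closure_mono hsub)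
  have hBsymm : ∀ b ∈ B, b⁻¹ ∈ B := by
    rintro b (hb | hb | hb)
    · exact Or.inl (U.inv_mem hb)
    · exact Or.inr (Or.inr (by simpa using hb))
    · exact Or.inr (Or.inl (by simpa using hb))
  set Bbar : Set (G ⧸ S) := QuotientGroup.mk '' B with hBbar_def
  have hBbar_c : IsCompact Bbar := hBc.image hπcont
  have hBbar_symm : ∀ b ∈ Bbar, b⁻¹ ∈ Bbar := by
    rintro b ⟨g, hg, rfl⟩
    exact ⟨g⁻¹, hBsymm g hg, rfl⟩
  have hBbar_gen : Subgroup.closure Bbar = ⊤ := by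
    have := Subgroup.map_top_of_surjective _ hπsurj
    rw [← this, ← hBgen, MonoidHom.map_closure]
    rfl
  -- finitely many translates of Ubar cover Bbar
  obtain ⟨T, hT⟩ := hBbar_c.elim_finite_subcover
    (fun q : G ⧸ S => q • (Ubar : Set (G ⧸ S)))
    (fun q => hUbar_o.smul q)
    (fun x _ => Set.mem_iUnion.2 ⟨x, ⟨1, Ubar.one_mem, by simp⟩⟩)
  set U1 : Set (G ⧸ S) :=
    (Ubar : Set (G ⧸ S)) ∩ ⋂ q ∈ T, (fun y => q⁻¹ * y * q) ⁻¹' (Ubar : Set (G ⧸ S))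
    with hU1def
  have hU1o : IsOpen U1 := by
    refine hUbar_o.inter (isOpen_biInter_finset fun q _ => hUbar_o.preimage ?_)
    fun_prop
  have hU11 : (1 : G ⧸ S) ∈ U1 :=
    ⟨Ubar.one_mem, Set.mem_iInter₂.2 fun q _ => by simpa using Ubar.one_mem⟩
  have hU1key : ∀ b ∈ Bbar, ∀ y ∈ U1, b⁻¹ * y * b ∈ Ubar := by
    intro b hb y hy
    obtain ⟨q, hqT, hq⟩ := Set.mem_iUnion₂.1 (hT hb)
    obtain ⟨u, hu, rfl⟩ := hq
    have h1 : q⁻¹ * y * q ∈ Ubar := Set.mem_iInter₂.1 hy.2 q hqT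
    have h2 := Ubar.mul_mem (Ubar.mul_mem (Ubar.inv_mem hu) h1) hu
    have : (q • u)⁻¹ * y * q • u = u⁻¹ * (q⁻¹ * y * q) * u := by
      simp [smul_eq_mul]; group
    rw [this]
    exact h2
  -- step 4: some open normal subgroup has small image
  -- images of open normal subgroups of `G` are open (hence closed) subgroups of `G ⧸ S`
  have himg_open : ∀ N : Subgroup G, IsOpen (N : Set G) →
      IsOpen ((N.map (QuotientGroup.mk' S) : Subgroup (G ⧸ S)) : Set (G ⧸ S)) := by
    intro N hNo
    exact hπopen _ hNo
  have hstep4 : ∃ N : Subgroup G, N.Normal ∧ IsOpen (N : Set G) ∧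
      ((N.map (QuotientGroup.mk' S) : Set (G ⧸ S)) ∩ (Ubar : Set (G ⧸ S)) ⊆ U1) := by
    by_contra hcon
    push_neg at hcon
    set ι := {N : Subgroup G // N.Normal ∧ IsOpen (N : Set G)} with hιdef
    have htopmem : (⊤ : Subgroup G).Normal ∧ IsOpen ((⊤ : Subgroup G) : Set G) := by
      refine ⟨inferInstance, ?_⟩
      rw [Subgroup.coe_top]
      exact isOpen_univ
    set Ntop : ι := ⟨⊤, htopmem⟩ with hNtopdef
    haveI : Nonempty ι := ⟨Ntop⟩
    set F : ι → Set (G ⧸ S) := fun N =>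
      (((N.1.map (QuotientGroup.mk' S) : Subgroup (G ⧸ S)) : Set (G ⧸ S)) ∩
        (Ubar : Set (G ⧸ S))) ∩ U1ᶜ with hFdef
    have hFcl : ∀ N : ι, IsClosed (F N) := by
      intro N
      refine (IsClosed.inter (IsClosed.inter ?_ ?_) hU1o.isClosed_compl)
      · exact Subgroup.isClosed_of_isOpen _ (himg_open N.1 N.2.2)
      · exact Subgroup.isClosed_of_isOpen _ hUbar_o
    have hFc : ∀ N : ι, IsCompact (F N) := fun N =>
      hUbar_c.of_isClosed_subset (hFcl N) (fun x hx => hx.1.2)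
    have hFne : ∀ N : ι, (F N).Nonempty := by
      intro N
      obtain ⟨x, hx1, hx2⟩ := Set.not_subset.1 (hcon N.1 N.2.1 N.2.2)
      exact ⟨x, ⟨hx1, hx2⟩⟩
    have hFdir : Directed (· ⊇ ·) F := by
      intro N M
      haveI := N.2.1; haveI := M.2.1
      refine ⟨⟨N.1 ⊓ M.1, inferInstance, ?_⟩, ?_, ?_⟩
      · rw [Subgroup.coe_inf]; exact N.2.2.inter M.2.2
      · intro x hx
        exact ⟨⟨Subgroup.map_mono inf_le_left hx.1.1, hx.1.2⟩, hx.2⟩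
      · intro x hx
        exact ⟨⟨Subgroup.map_mono inf_le_right hx.1.1, hx.1.2⟩, hx.2⟩
    obtain ⟨y, hy⟩ := IsCompact.nonempty_iInter_of_directed_nonempty_isCompact_isClosed
      F hFdir hFne hFc hFcl
    have hyU : y ∈ Ubar := (Set.mem_iInter.1 hy Ntop).1.2
    have hynU1 : y ∉ U1 := (Set.mem_iInter.1 hy Ntop).2
    obtain ⟨u, huU, hueq⟩ := hyU
    -- u lies in every open normal subgroup, hence in R, hence in S
    have huR : u ∈ R := by
      rw [hR, Subgroup.mem_sInf]
      intro N hN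
      have hmem := (Set.mem_iInter.1 hy ⟨N, hN⟩).1.1
      obtain ⟨n, hn, hneq⟩ := hmem
      have : n⁻¹ * u ∈ S := QuotientGroup.eq.mp (hneq.trans hueq.symm)
      have hS_le_N : S ≤ N := hSR.trans (by rw [hR]; exact sInf_le hN)
      have := N.mul_mem hn (hS_le_N this)
      simpa using this
    have huS : u ∈ S := hUR ⟨huU, huR⟩
    have : y = 1 := hueq.symm.trans ((QuotientGroup.eq_one_iff u).2 huS)
    exact hynU1 (this ▸ hU11)
  -- step 5-6: the normal core of Ubar is an open compact normal subgroup
  obtain ⟨N, hNn, hNo, hNsub⟩ := hstep4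
  set Nbar : Subgroup (G ⧸ S) := N.map (QuotientGroup.mk' S) with hNbar_def
  have hNbar_norm : Nbar.Normal := hNn.map _ hπsurj
  have hNbar_o : IsOpen (Nbar : Set (G ⧸ S)) := himg_open N hNo
  set DN : Set (G ⧸ S) := (Nbar : Set (G ⧸ S)) ∩ (Ubar : Set (G ⧸ S)) with hDNdef
  have hDN1 : (1 : G ⧸ S) ∈ DN := ⟨Nbar.one_mem, Ubar.one_mem⟩
  have hDNopen : IsOpen DN := hNbar_o.inter hUbar_o
  have hkey : ∀ q : G ⧸ S, ∀ y ∈ DN, q⁻¹ * y * q ∈ DN ∧ q * y * q⁻¹ ∈ DN := by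
    intro q
    have hq : q ∈ Subgroup.closure Bbar := hBbar_gen ▸ Subgroup.mem_top q
    refine Subgroup.closure_induction ?_ ?_ ?_ ?_ hq
    · intro b hb y hy
      have h1 : b⁻¹ * y * b ∈ Ubar := hU1key b hb y (hNsub hy)
      have h1' : b⁻¹ * y * b ∈ Nbar := by
        have := hNbar_norm.conj_mem y hy.1 b⁻¹
        simpa using this
      have hbinv : b⁻¹ ∈ Bbar := hBbar_symm b hb
      have h2 : b * y * b⁻¹ ∈ Ubar := by
        have := hU1key b⁻¹ hbinv y (hNsub hy)
        simpa using this
      have h2' : b * y * b⁻¹ ∈ Nbar := hNbar_norm.conj_mem y hy.1 b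
      exact ⟨⟨h1', h1⟩, ⟨h2', h2⟩⟩
    · intro y hy
      simpa using hy
    · intro q1 q2 _ _ ih1 ih2 y hy
      constructor
      · have h1 := (ih1 y hy).1
        have h2 := (ih2 _ h1).1
        have : q2⁻¹ * (q1⁻¹ * y * q1) * q2 = (q1 * q2)⁻¹ * y * (q1 * q2) := by group
        rwa [this] at h2
      · have h1 := (ih2 y hy).2
        have h2 := (ih1 _ h1).2
        have : q1 * (q2 * y * q2⁻¹) * q1⁻¹ = (q1 * q2) * y * (q1 * q2)⁻¹ := by group
        rwa [this] at h2
    · intro q _ ih y hy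
      refine ⟨by simpa using (ih y hy).2, by simpa using (ih y hy).1⟩
  set KQ : Subgroup (G ⧸ S) := Ubar.normalCore with hKQdef
  have hDNKQ : DN ⊆ (KQ : Set (G ⧸ S)) := by
    intro y hy
    intro b
    exact ((hkey b y hy).2).2
  have hKQo : IsOpen (KQ : Set (G ⧸ S)) :=
    Subgroup.isOpen_of_mem_nhds _ (Filter.mem_of_superset (hDNopen.mem_nhds hDN1) hDNKQ)
  have hKQc : IsCompact (KQ : Set (G ⧸ S)) :=
    hUbar_c.of_isClosed_subset (Subgroup.isClosed_of_isOpen _ hKQo) Ubar.normalCore_le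
  haveI hKQn : KQ.Normal := Subgroup.normalCore_normal Ubar
  -- pull back to G
  set P : Subgroup G := KQ.comap (QuotientGroup.mk' S) with hPdef
  haveI hPn : P.Normal := hKQn.comap _
  have hPo : IsOpen (P : Set G) := by
    have : (P : Set G) = QuotientGroup.mk ⁻¹' (KQ : Set (G ⧸ S)) := rfl
    rw [this]
    exact hKQo.preimage hπcont
  haveI hPdisc : DiscreteTopology (G ⧸ P) := QuotientGroup.discreteTopology hPo
  have hPfin : Finite (G ⧸ P) := hfin P hPn (Subgroup.isClosed_of_isOpen _ hPo) hPdisc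
  have hQfin : Finite ((G ⧸ S) ⧸ KQ) := by
    have hsurj : Function.Surjective
        (QuotientGroup.map P KQ (QuotientGroup.mk' S) le_rfl) := by
      intro z
      obtain ⟨q, rfl⟩ := QuotientGroup.mk_surjective z
      obtain ⟨g, rfl⟩ := hπsurj q
      exact ⟨QuotientGroup.mk g, rfl⟩
    exact Finite.of_surjective _ hsurj
  have hQcompact : CompactSpace (G ⧸ S) := by
    rw [← isCompact_univ_iff]
    have hcover : (Set.univ : Set (G ⧸ S)) =
        ⋃ c : (G ⧸ S) ⧸ KQ, (Quotient.out c) • (KQ : Set (G ⧸ S)) := by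
      ext x
      simp only [Set.mem_univ, true_iff, Set.mem_iUnion]
      refine ⟨QuotientGroup.mk x, ?_⟩
      have hout : (QuotientGroup.mk (Quotient.out (QuotientGroup.mk x : (G ⧸ S) ⧸ KQ))
          : (G ⧸ S) ⧸ KQ) = QuotientGroup.mk x := QuotientGroup.out_eq' _
      have hmem : (Quotient.out (QuotientGroup.mk x : (G ⧸ S) ⧸ KQ))⁻¹ * x ∈ KQ :=
        QuotientGroup.eq.mp hout
      exact ⟨_, hmem, by simp [smul_eq_mul, mul_inv_cancel_left]⟩
    rw [hcover]
    exact isCompact_iUnion fun c => hKQc.smul _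
  refine ⟨hQcompact, ?_⟩
  -- finally, R ≤ S
  intro r hr
  have hrP : r ∈ P := hRle P hPn hPo hr
  have hrKQ : (QuotientGroup.mk' S) r ∈ KQ := hrP
  have hrU : (QuotientGroup.mk' S) r ∈ Ubar := Ubar.normalCore_le hrKQ
  obtain ⟨u, huU, hueq⟩ := hrU
  have huS : u⁻¹ * r ∈ S := QuotientGroup.eq.mp hueq
  have huR : u ∈ R := by
    have h1 : u⁻¹ * r ∈ R := hSR huS
    have := R.mul_mem hr (R.inv_mem h1)
    simpa [mul_assoc] using this
  have : u ∈ S := hUR ⟨huU, huR⟩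
  have h1 : (QuotientGroup.mk' S) u = 1 := (QuotientGroup.eq_one_iff u).2 this
  have h2 : (QuotientGroup.mk' S) r = 1 := by rw [← hueq]; exact h1
  exact (QuotientGroup.eq_one_iff r).1 h2

/-- The key rigidity lemma: any open normal subgroup of the discrete residual `R`
is all of `R`. -/
theorem CM.mainLemma [LocallyCompactSpace G] [T2Space G] [TotallyDisconnectedSpace G]
    (hcg : CompactlyGeneratedGroup G)
    (hfin : ∀ N : Subgroup G, N.Normal → IsClosed (N : Set G) →
      DiscreteTopology (G ⧸ N) → Finite (G ⧸ N))
    (R : Subgroup G)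
    (hR : R = sInf {N : Subgroup G | N.Normal ∧ IsOpen (N : Set G)})
    (hRn : R.Normal) (hcpt : CompactSpace (G ⧸ R))
    (M : Subgroup ↥R) (hMn : M.Normal) (hMo : IsOpen (M : Set ↥R)) : M = ⊤ := by
  -- transfer `M` to a subgroup of `G`
  set O : Subgroup G := M.map R.subtype with hOdef
  have hOle : O ≤ R := Subgroup.map_subtype_le M
  obtain ⟨Ω, hΩo, hΩpre⟩ := isOpen_induced_iff.1 hMo
  have hOset : (O : Set G) = Ω ∩ (R : Set G) := by
    rw [hOdef, Subgroup.coe_map, Subgroup.coe_subtype, ← hΩpre,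
      Set.image_preimage_eq_inter_range, Subtype.range_coe]
  have hΩ1 : (1 : G) ∈ Ω := by
    have h1 : (1 : G) ∈ (O : Set G) := O.one_mem
    rw [hOset] at h1
    exact h1.1
  have hOnorm : ∀ g ∈ R, ∀ y ∈ O, g * y * g⁻¹ ∈ O := by
    intro g hg y hy
    obtain ⟨m, hm, rfl⟩ := hy
    exact ⟨⟨g, hg⟩ * m * ⟨g, hg⟩⁻¹, hMn.conj_mem m hm ⟨g, hg⟩, rfl⟩
  -- a compact set of representatives for `G ⧸ R`
  have hKex : ∃ K : Set G, IsCompact K ∧ ∀ g : G, ∃ k ∈ K, k⁻¹ * g ∈ R := by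
    choose Cg hCgc hCgn using fun g : G => exists_compact_mem_nhds g
    have hcov : (Set.univ : Set (G ⧸ R)) ⊆
        ⋃ g : G, QuotientGroup.mk '' interior (Cg g) := by
      intro y _
      obtain ⟨g, rfl⟩ := QuotientGroup.mk_surjective y
      exact Set.mem_iUnion.2 ⟨g, ⟨g, mem_interior_iff_mem_nhds.2 (hCgn g), rfl⟩⟩
    obtain ⟨T, hT⟩ := isCompact_univ.elim_finite_subcover
      (fun g : G => QuotientGroup.mk '' interior (Cg g))
      (fun g => QuotientGroup.isOpenMap_coe _ isOpen_interior) hcov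
    refine ⟨⋃ g ∈ T, Cg g, T.finite_toSet.isCompact_biUnion (fun g _ => hCgc g), ?_⟩
    intro g
    obtain ⟨t, htT, k, hk, hkeq⟩ := Set.mem_iUnion₂.1 (hT (Set.mem_univ (QuotientGroup.mk g)))
    exact ⟨k, Set.mem_biUnion htT (interior_subset hk), QuotientGroup.eq.mp hkeq⟩
  obtain ⟨K, hKc, hK⟩ := hKex
  -- tube lemma: a small neighbourhood whose K-conjugates stay in Ω
  have hconj_cont : Continuous (fun p : G × G => p.1⁻¹ * p.2 * p.1) := by fun_prop
  have hsub : K ×ˢ ({1} : Set G) ⊆ (fun p : G × G => p.1⁻¹ * p.2 * p.1) ⁻¹' Ω := by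
    rintro ⟨k, y⟩ ⟨_, hy⟩
    simp only [Set.mem_singleton_iff] at hy
    subst hy
    simpa using hΩ1
  obtain ⟨u, v, _, hvo, hKu, h1v, huv⟩ := generalized_tube_lemma hKc isCompact_singleton
    (hΩo.preimage hconj_cont) hsub
  obtain ⟨U, hUc, hUo, hUv⟩ := CM.exists_compact_open_subgroup hvo (h1v rfl)
  -- apply the workhorse lemma with `S` the normal core of `O`
  have hURS : (U : Set G) ∩ (R : Set G) ⊆ (O.normalCore : Set G) := by
    rintro y ⟨hyU, hyR⟩
    show y ∈ O.normalCore
    intro b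
    obtain ⟨k, hkK, hkr⟩ := hK b⁻¹
    set r : G := k⁻¹ * b⁻¹ with hrdef
    have hconj1 : k⁻¹ * y * k ∈ Ω := by
      have hmem : ((k, y) : G × G) ∈ u ×ˢ v := ⟨hKu hkK, hUv hyU⟩
      exact huv hmem
    have hconjR : k⁻¹ * y * k ∈ R := by
      have := hRn.conj_mem y hyR k⁻¹
      simpa using this
    have hO1 : k⁻¹ * y * k ∈ O := by
      rw [← SetLike.mem_coe, hOset]
      exact ⟨hconj1, hconjR⟩
    have hO2 : r⁻¹ * (k⁻¹ * y * k) * r ∈ O := by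
      have := hOnorm r⁻¹ (R.inv_mem hkr) _ hO1
      simpa using this
    have hbyb : b * y * b⁻¹ = r⁻¹ * (k⁻¹ * y * k) * r := by
      rw [hrdef]
      group
    rw [hbyb]
    exact hO2
  have hRS := (CM.lemmaW hcg hfin R hR O.normalCore (Subgroup.normalCore_normal O)
    (O.normalCore_le.trans hOle) U hUc hUo hURS).2
  have hRO : R ≤ O := hRS.trans O.normalCore_le
  rw [eq_top_iff]
  intro m _
  obtain ⟨m', hm', hval⟩ := hRO m.2
  have : m' = m := Subtype.coe_injective hval
  exact this ▸ hm'

end CMhelpers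

/-- **Corollary (Caprace–Monod).** Let `G` be a compactly generated totally
disconnected locally compact Hausdorff group all of whose discrete quotients are
finite. Then the discrete residual `Res(G)` is cocompact and admits no
non-trivial discrete quotient and no non-trivial compact quotient. -/
theorem discrete_residual_no_discrete_or_compact_quotient (G : Type*) [Group G]
    [TopologicalSpace G] [IsTopologicalGroup G] [LocallyCompactSpace G] [T2Space G]
    [TotallyDisconnectedSpace G]
    (hcg : CompactlyGeneratedGroup G)
    (hfin : ∀ N : Subgroup G, N.Normal → IsClosed (N : Set G) →
      DiscreteTopology (G ⧸ N) → Finite (G ⧸ N))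
    (R : Subgroup G)
    (hR : R = sInf {N : Subgroup G | N.Normal ∧ IsOpen (N : Set G)}) :
    CompactSpace (G ⧸ R) ∧
    (∀ N : Subgroup ↥R, N.Normal → IsClosed (N : Set ↥R) → N ≠ ⊤ →
      ¬ DiscreteTopology (↥R ⧸ N) ∧ ¬ CompactSpace (↥R ⧸ N)) := by
  have hRn : R.Normal := by
    rw [hR]
    exact ⟨fun n hn g => Subgroup.mem_sInf.2 fun N hN =>
      hN.1.conj_mem n (Subgroup.mem_sInf.1 hn N hN) g⟩
  have hRclosed : IsClosed (R : Set G) := by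
    have : (R : Set G) = ⋂ N ∈ {N : Subgroup G | N.Normal ∧ IsOpen (N : Set G)}, ↑N := by
      rw [hR, Subgroup.coe_sInf]
    rw [this]
    exact isClosed_biInter fun N hN => Subgroup.isClosed_of_isOpen N hN.2
  obtain ⟨U0, hU0c, hU0o, -⟩ :=
    CM.exists_compact_open_subgroup (G := G) isOpen_univ (Set.mem_univ 1)
  have hpart1 : CompactSpace (G ⧸ R) :=
    (CM.lemmaW hcg hfin R hR R hRn le_rfl U0 hU0c hU0o fun x hx => hx.2).1
  refine ⟨hpart1, ?_⟩
  intro N hNn hNcl hNne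
  haveI := hNn
  haveI : LocallyCompactSpace ↥R := hRclosed.locallyCompactSpace
  have hML : ∀ M : Subgroup ↥R, M.Normal → IsOpen (M : Set ↥R) → M = ⊤ :=
    fun M hMn hMo => CM.mainLemma hcg hfin R hR hRn hpart1 M hMn hMo
  obtain ⟨x, hx⟩ : ∃ x : ↥R, x ∉ N := by
    by_contra h
    push_neg at h
    exact hNne ((Subgroup.eq_top_iff' N).2 h)
  constructor
  · intro hdisc
    have hNopen : IsOpen (N : Set ↥R) := by
      have h1 : IsOpen ({(1 : ↥R ⧸ N)} : Set (↥R ⧸ N)) := isOpen_discrete _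
      have h2 : (N : Set ↥R) = (QuotientGroup.mk : ↥R → ↥R ⧸ N) ⁻¹' {1} := by
        ext r
        simp [QuotientGroup.eq_one_iff]
      rw [h2]
      exact h1.preimage continuous_quot_mk
    exact hNne (hML N hNn hNopen)
  · intro hcpt
    haveI := hcpt
    set Cx : Set ↥R := (fun r : ↥R => x⁻¹ * r) ⁻¹' (N : Set ↥R) with hCxdef
    have hCxcl : IsClosed Cx := hNcl.preimage (by fun_prop)
    have h1notC : (1 : ↥R) ∈ Cxᶜ := by
      intro h
      have : x⁻¹ * 1 ∈ N := h
      exact hx (by simpa using N.inv_mem this)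
    obtain ⟨W, hWc, hWo, hWsub⟩ :=
      CM.exists_compact_open_subgroup (G := ↥R) hCxcl.isOpen_compl h1notC
    set Wbar : Subgroup (↥R ⧸ N) := W.map (QuotientGroup.mk' N) with hWbardef
    have hWbar_o : IsOpen (Wbar : Set (↥R ⧸ N)) := by
      have : (Wbar : Set (↥R ⧸ N)) = QuotientGroup.mk '' (W : Set ↥R) := rfl
      rw [this]
      exact QuotientGroup.isOpenMap_coe _ hWo
    have hxnot : (QuotientGroup.mk' N) x ∉ Wbar := by
      rintro ⟨w, hw, heq⟩
      have h1 : w⁻¹ * x ∈ N := QuotientGroup.eq.mp heq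
      have h2 : x⁻¹ * w ∈ N := by
        have := N.inv_mem h1
        simpa using this
      exact hWsub hw h2
    haveI : DiscreteTopology ((↥R ⧸ N) ⧸ Wbar) := QuotientGroup.discreteTopology hWbar_o
    haveI : Finite ((↥R ⧸ N) ⧸ Wbar) := finite_of_compact_of_discrete
    haveI : Wbar.FiniteIndex := Subgroup.finiteIndex_of_finite_quotient (H := Wbar)
    have hPcl : IsClosed (Wbar.normalCore : Set (↥R ⧸ N)) :=
      Subgroup.normalCore_isClosed _ (Subgroup.isClosed_of_isOpen _ hWbar_o)
    have hPo : IsOpen (Wbar.normalCore : Set (↥R ⧸ N)) :=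
      Subgroup.isOpen_of_isClosed_of_finiteIndex _ hPcl
    set M : Subgroup ↥R := Wbar.normalCore.comap (QuotientGroup.mk' N) with hMdef
    have hMn : M.Normal := (Subgroup.normalCore_normal Wbar).comap _
    have hMo : IsOpen (M : Set ↥R) := by
      have : (M : Set ↥R) = (QuotientGroup.mk : ↥R → ↥R ⧸ N) ⁻¹' ↑Wbar.normalCore := rfl
      rw [this]
      exact hPo.preimage continuous_quot_mk
    have htop := hML M hMn hMo
    have hxM : x ∈ M := htop ▸ Subgroup.mem_top x
    exact hxnot (Wbar.normalCore_le hxM)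
end

section
/- Let G be a compactly generated totally disconnected locally compact Hausdorff group. Then every identity neighbourhood V of G contains a compact normal subgroup Q of G such that every filtering family of non-discrete closed normal subgroups of the quotient group G/Q has non-trivial intersection. -/
open scoped Pointwise Topology

theorem myVanDantzig (G : Type*) [Group G] [TopologicalSpace G]
    [IsTopologicalGroup G] [LocallyCompactSpace G] [T2Space G] [TotallyDisconnectedSpace G]
    {V : Set G} (hV : V ∈ 𝓝 1) :
    ∃ U : Subgroup G, IsOpen (U : Set G) ∧ IsCompact (U : Set G) ∧ (U : Set G) ⊆ V := by
  obtain ⟨C, hCn, hCV, hCcomp⟩ := local_compact_nhds hV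
  obtain ⟨W, hWclopen, h1W, hWC⟩ :=
    (loc_compact_Haus_tot_disc_of_zero_dim (H := G)).mem_nhds_iff.1 hCn
  have hWcomp : IsCompact W := hCcomp.of_isClosed_subset hWclopen.isClosed hWC
  obtain ⟨K, hKn, hKW⟩ :=
    compact_open_separated_mul_right hWcomp hWclopen.isOpen (Set.Subset.refl W)
  obtain ⟨O, hOK, hOopen, h1O⟩ := mem_nhds_iff.1 hKn
  set K'' : Set G := O ∩ O⁻¹ with hK''def
  have hK''open : IsOpen K'' := hOopen.inter hOopen.inv
  have h1K'' : (1 : G) ∈ K'' := ⟨h1O, by simpa using h1O⟩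
  have hK''symm : K''⁻¹ = K'' := by
    rw [hK''def, Set.inter_inv, inv_inv, Set.inter_comm]
  have hprodW : ∀ l : List G, (∀ x ∈ l, x ∈ K'') → l.prod ∈ W := by
    have hstep : ∀ l : List G, (∀ x ∈ l, x ∈ K'') → ∀ w ∈ W, w * l.prod ∈ W := by
      intro l
      induction l with
      | nil => intro _ w hw; simpa using hw
      | cons a l ih =>
        intro h w hw
        have ha : a ∈ K'' := h a (List.mem_cons_self (a := a) (l := l))
        have hwa : w * a ∈ W := hKW (Set.mul_mem_mul hw (hOK ha.1))
        have := ih (fun x hx => h x (List.mem_cons_of_mem a hx)) (w * a) hwa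
        simpa [mul_assoc] using this
    intro l hl
    simpa using hstep l hl 1 h1W
  have hUW : (Subgroup.closure K'' : Set G) ⊆ W := by
    intro g hg
    have hg' : g ∈ (Subgroup.closure K'').toSubmonoid := hg
    rw [Subgroup.closure_toSubmonoid] at hg'
    have : K'' ∪ K''⁻¹ = K'' := by rw [hK''symm, Set.union_self]
    rw [this] at hg'
    obtain ⟨l, hl, rfl⟩ := Submonoid.exists_list_of_mem_closure hg'
    exact hprodW l hl
  have hUopen : IsOpen ((Subgroup.closure K'' : Subgroup G) : Set G) :=
    Subgroup.isOpen_of_mem_nhds _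
      (Filter.mem_of_superset (hK''open.mem_nhds h1K'') Subgroup.subset_closure)
  exact ⟨Subgroup.closure K'', hUopen,
    hWcomp.of_isClosed_subset ((Subgroup.closure K'').isClosed_of_isOpen hUopen) hUW,
    fun x hx => hCV (hWC (hUW hx))⟩


/-- **Proposition (Caprace–Monod).** Let `G` be a compactly generated totally
disconnected locally compact Hausdorff group. Then any identity neighbourhood
`V` contains a compact normal subgroup `Q` such that any filtering family of
non-discrete closed normal subgroups of `G/Q` has non-trivial intersection. -/
theorem filter_of_closed_normal_subgroups (G : Type*) [Group G] [TopologicalSpace G]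
    [IsTopologicalGroup G] [LocallyCompactSpace G] [T2Space G]
    [TotallyDisconnectedSpace G]
    (hcg : CompactlyGeneratedGroup G) :
    ∀ V ∈ nhds (1 : G), ∃ Q : Subgroup G, ∃ hQ : Q.Normal,
      IsCompact (Q : Set G) ∧ (Q : Set G) ⊆ V ∧
      (haveI := hQ;
        ∀ F : Set (Subgroup (G ⧸ Q)),
          F.Nonempty →
          (∀ A ∈ F, ∀ B ∈ F, ∃ C ∈ F, C ≤ A ∧ C ≤ B) →
          (∀ N ∈ F, N.Normal ∧ IsClosed (N : Set (G ⧸ Q)) ∧ ¬ DiscreteTopology ↥N) →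
          sInf F ≠ ⊥) := by
  intro V hV
  obtain ⟨U, hUopen, hUcomp, hUV⟩ := myVanDantzig G hV
  have hUclosed : IsClosed (U : Set G) := U.isClosed_of_isOpen hUopen
  have hQclosed : IsClosed (U.normalCore : Set G) := by
    have : (U.normalCore : Set G) = ⋂ b : G, (fun a => b * a * b⁻¹) ⁻¹' (U : Set G) := by
      ext a
      simp only [Set.mem_iInter, Set.mem_preimage, SetLike.mem_coe]
      rfl
    rw [this]
    exact isClosed_iInter fun b => hUclosed.preimage (by fun_prop)
  refine ⟨U.normalCore, U.normalCore_normal,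
    hUcomp.of_isClosed_subset hQclosed U.normalCore_le,
    fun x hx => hUV (U.normalCore_le hx), ?_⟩
  intro F hFne hFfilt hFprop hbot
  set Q : Subgroup G := U.normalCore with hQdef
  -- the image of U in the quotient
  set Ub : Subgroup (G ⧸ Q) := U.map (QuotientGroup.mk' Q) with hUbdef
  have hUbset : (Ub : Set (G ⧸ Q)) = (QuotientGroup.mk '' (U : Set G)) := by
    rw [hUbdef, Subgroup.coe_map, QuotientGroup.coe_mk']
  have hUbopen : IsOpen (Ub : Set (G ⧸ Q)) := by
    rw [hUbset]; exact QuotientGroup.isOpenMap_coe _ hUopen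
  have hUbcomp : IsCompact (Ub : Set (G ⧸ Q)) := by
    rw [hUbset]; exact hUcomp.image continuous_quotient_mk'
  have hpre : ∀ x : G, (QuotientGroup.mk x : G ⧸ Q) ∈ Ub ↔ x ∈ U := by
    intro x
    constructor
    · intro hx
      obtain ⟨u, hu, hux⟩ := hx
      have h1 : u⁻¹ * x ∈ Q := (QuotientGroup.eq (s := Q)).1 hux
      have := U.mul_mem hu (U.normalCore_le h1)
      simpa using this
    · intro hx; exact ⟨x, hx, rfl⟩
  have hcore : ∀ x : G ⧸ Q, x ∈ Ub → (∀ k, k⁻¹ * x * k ∈ Ub) → x = 1 := by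
    intro x hx hconj
    obtain ⟨g, rfl⟩ := QuotientGroup.mk_surjective x
    have hg : g ∈ Q := by
      show ∀ b : G, b * g * b⁻¹ ∈ U
      intro b
      have h1 := hconj ((QuotientGroup.mk b)⁻¹)
      rw [inv_inv] at h1
      have h2 : (QuotientGroup.mk (b * g * b⁻¹) : G ⧸ Q) ∈ Ub := by
        simpa using h1
      exact (hpre _).1 h2
    exact (QuotientGroup.eq_one_iff g).2 hg
  -- generating set
  obtain ⟨K, hKcomp, hKgen⟩ := hcg
  set S : Set G := K ∪ K⁻¹ ∪ {1} with hSdef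
  have hSsymm : S⁻¹ = S := by
    rw [hSdef]
    simp only [Set.union_inv, inv_inv, Set.inv_singleton, inv_one]
    rw [Set.union_comm K⁻¹ K]
  have hScomp : IsCompact S := (hKcomp.union hKcomp.inv).union isCompact_singleton
  have hSpow : ∀ g : G, ∃ n : ℕ, g ∈ S ^ n := by
    let T : Subgroup G :=
      { carrier := {g | ∃ n : ℕ, g ∈ S ^ n}
        one_mem' := ⟨0, by rw [pow_zero]; exact Set.mem_one.2 rfl⟩
        mul_mem' := by
          rintro a b ⟨m, hm⟩ ⟨n, hn⟩
          exact ⟨m + n, by rw [pow_add]; exact Set.mul_mem_mul hm hn⟩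
        inv_mem' := by
          rintro a ⟨n, hn⟩
          refine ⟨n, ?_⟩
          rw [← hSsymm, inv_pow]
          exact Set.inv_mem_inv.2 hn }
    have hKT : K ⊆ T := fun k hk => ⟨1, by rw [pow_one]; exact Or.inl (Or.inl hk)⟩
    have hle : Subgroup.closure K ≤ T := (Subgroup.closure_le T).2 hKT
    intro g
    exact hle (by rw [hKgen]; trivial)
  set Sb : Set (G ⧸ Q) := QuotientGroup.mk '' S with hSbdef
  have hSbpow : ∀ h : G ⧸ Q, ∃ n : ℕ, h ∈ Sb ^ n := by
    have himg : ∀ n : ℕ, (QuotientGroup.mk '' (S ^ n) : Set (G ⧸ Q)) ⊆ Sb ^ n := by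
      intro n
      induction n with
      | zero =>
        rw [pow_zero, pow_zero]
        rintro x ⟨g, hg, rfl⟩
        rw [Set.mem_one] at hg ⊢
        rw [hg]; rfl
      | succ n ih =>
        rw [pow_succ, pow_succ]
        have : (QuotientGroup.mk '' (S ^ n * S) : Set (G ⧸ Q)) =
            (QuotientGroup.mk '' (S ^ n)) * (QuotientGroup.mk '' S) := by
          have := Set.image_mul (QuotientGroup.mk' Q) (s := S ^ n) (t := S)
          simpa [QuotientGroup.coe_mk'] using this
        rw [this]
        exact Set.mul_subset_mul ih (le_refl _)
    intro h
    obtain ⟨g, rfl⟩ := QuotientGroup.mk_surjective h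
    obtain ⟨n, hn⟩ := hSpow g
    exact ⟨n, himg n ⟨g, hn, rfl⟩⟩
  have hSbcomp : IsCompact Sb := hScomp.image continuous_quotient_mk'
  have hcover : Sb ⊆ ⋃ t : G ⧸ Q, t • (Ub : Set (G ⧸ Q)) := by
    intro s _
    exact Set.mem_iUnion.2 ⟨s, ⟨1, Ub.one_mem, by simp⟩⟩
  obtain ⟨T, hT⟩ := hSbcomp.elim_finite_subcover (fun t => t • (Ub : Set (G ⧸ Q)))
    (fun t => hUbopen.smul t) hcover
  set W1 : Set (G ⧸ Q) := ⋂ t ∈ T, (fun x => t⁻¹ * x * t) ⁻¹' (Ub : Set (G ⧸ Q)) with hW1def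
  have hW1open : IsOpen W1 :=
    isOpen_biInter_finset fun t _ => hUbopen.preimage (by fun_prop)
  have h1W1 : (1 : G ⧸ Q) ∈ W1 := by
    rw [hW1def]
    refine Set.mem_iInter₂.2 fun t _ => ?_
    simpa using Ub.one_mem
  have hW1conj : ∀ x ∈ W1, ∀ s ∈ Sb, s⁻¹ * x * s ∈ Ub := by
    intro x hx s hs
    obtain ⟨t, ht, hst⟩ : ∃ t ∈ T, s ∈ t • (Ub : Set (G ⧸ Q)) := by
      simpa using hT hs
    obtain ⟨u, hu, rfl⟩ := hst
    have hxt : t⁻¹ * x * t ∈ Ub := Set.mem_iInter₂.1 hx t ht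
    have hfin : u⁻¹ * (t⁻¹ * x * t) * u ∈ Ub :=
      Ub.mul_mem (Ub.mul_mem (Ub.inv_mem hu) hxt) hu
    have heq : (t • u)⁻¹ * x * (t • u) = u⁻¹ * (t⁻¹ * x * t) * u := by
      simp only [smul_eq_mul]; group
    rw [heq]; exact hfin
  by_cases hcase : ∃ N ∈ F, ∀ x, x ∈ N → x ∈ Ub → x ∈ W1
  · obtain ⟨N, hNF, hNW1⟩ := hcase
    obtain ⟨hNnormal, hNclosed, hNnd⟩ := hFprop N hNF
    have key : ∀ n : ℕ, ∀ k ∈ Sb ^ n, ∀ x, x ∈ N → x ∈ Ub → k⁻¹ * x * k ∈ Ub := by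
      intro n
      induction n with
      | zero =>
        intro k hk x _ hxU
        rw [pow_zero, Set.mem_one] at hk
        subst hk; simpa using hxU
      | succ n ih =>
        intro k hk x hxN hxU
        rw [pow_succ] at hk
        obtain ⟨k', hk', s, hs, rfl⟩ := Set.mem_mul.1 hk
        have hy : k'⁻¹ * x * k' ∈ Ub := ih k' hk' x hxN hxU
        have hyN : k'⁻¹ * x * k' ∈ N := by
          have := hNnormal.conj_mem x hxN k'⁻¹
          simpa using this
        have hres := hW1conj _ (hNW1 _ hyN hy) s hs
        have heq : (k' * s)⁻¹ * x * (k' * s) = s⁻¹ * (k'⁻¹ * x * k') * s := by group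
        rw [heq]; exact hres
    have htriv : ∀ x, x ∈ N → x ∈ Ub → x = 1 := by
      intro x hxN hxU
      refine hcore x hxU fun k => ?_
      obtain ⟨n, hn⟩ := hSbpow k
      exact key n k hn x hxN hxU
    apply hNnd
    rw [discreteTopology_iff_nhds]
    intro x
    refine le_antisymm ?_ (pure_le_nhds x)
    rw [Filter.le_pure_iff, nhds_subtype_eq_comap]
    refine Filter.mem_comap.2 ⟨(x : G ⧸ Q) • (Ub : Set (G ⧸ Q)), ?_, ?_⟩
    · exact (hUbopen.smul _).mem_nhds ⟨1, Ub.one_mem, by simp⟩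
    · rintro y hy
      obtain ⟨u, hu, huy⟩ := hy
      have h1 : (x : G ⧸ Q)⁻¹ * (y : G ⧸ Q) ∈ Ub := by
        rw [← huy]; simpa [smul_eq_mul] using hu
      have h2 : (x : G ⧸ Q)⁻¹ * (y : G ⧸ Q) ∈ N := N.mul_mem (N.inv_mem x.2) y.2
      have h3 := htriv _ h2 h1
      have hxy : (x : G ⧸ Q) = (y : G ⧸ Q) := inv_mul_eq_one.1 h3
      exact Set.mem_singleton_iff.2 (Subtype.ext hxy.symm)
  · push_neg at hcase
    haveI : Nonempty {N // N ∈ F} := hFne.to_subtype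
    set Z : {N // N ∈ F} → Set (G ⧸ Q) := fun N =>
      ((N : Subgroup (G ⧸ Q)) : Set (G ⧸ Q)) ∩ (Ub : Set (G ⧸ Q)) ∩ W1ᶜ with hZdef
    have hZne : ∀ i, (Z i).Nonempty := by
      rintro ⟨N, hN⟩
      obtain ⟨x, hxN, hxU, hxW⟩ := hcase N hN
      exact ⟨x, ⟨hxN, hxU⟩, hxW⟩
    have hZclosed : ∀ i, IsClosed (Z i) := by
      rintro ⟨N, hN⟩
      exact (((hFprop N hN).2.1).inter (Ub.isClosed_of_isOpen hUbopen)).inter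
        hW1open.isClosed_compl
    have hZcomp : ∀ i, IsCompact (Z i) := fun i =>
      hUbcomp.of_isClosed_subset (hZclosed i) fun x hx => hx.1.2
    have hZdir : Directed (· ⊇ ·) Z := by
      rintro ⟨A, hA⟩ ⟨B, hB⟩
      obtain ⟨C, hC, hCA, hCB⟩ := hFfilt A hA B hB
      exact ⟨⟨C, hC⟩, fun x hx => ⟨⟨hCA hx.1.1, hx.1.2⟩, hx.2⟩,
        fun x hx => ⟨⟨hCB hx.1.1, hx.1.2⟩, hx.2⟩⟩
    obtain ⟨x, hx⟩ :=
      IsCompact.nonempty_iInter_of_directed_nonempty_isCompact_isClosed Z hZdir hZne hZcomp hZclosed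
    have hxall : x ∈ sInf F :=
      Subgroup.mem_sInf.2 fun N hN => (Set.mem_iInter.1 hx ⟨N, hN⟩).1.1
    rw [hbot, Subgroup.mem_bot] at hxall
    have hxW : x ∉ W1 := (Set.mem_iInter.1 hx (Classical.arbitrary _)).2
    exact hxW (hxall ▸ h1W1)
end

section
/- Let G be a compactly generated locally compact Hausdorff group. Then the following assertions are equivalent: (i) G is residually discrete; (ii) G is totally disconnected and is a SIN-group; (iii) the compact open normal subgroups of G form a basis of identity neighbourhoods. -/
open scoped Pointwise Topology

section AuxCM

set_option linter.unusedSectionVars false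

variable {G : Type*} [Group G] [TopologicalSpace G] [IsTopologicalGroup G]


variable {G : Type*} [Group G] [TopologicalSpace G] [IsTopologicalGroup G]

/-- A topological group whose identity component is trivial is totally disconnected. -/
lemma aux_td (h : connectedComponent (1 : G) = {1}) : TotallyDisconnectedSpace G := by
  rw [totallyDisconnectedSpace_iff_connectedComponent_singleton]
  intro x
  apply Set.eq_singleton_iff_unique_mem.2 ⟨mem_connectedComponent, ?_⟩
  intro y hy
  have h1 : x⁻¹ * y ∈ connectedComponent (x⁻¹ * x) :=
    (continuous_mul_left x⁻¹).image_connectedComponent_subset x ⟨y, hy, rfl⟩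
  rw [inv_mul_cancel, h] at h1
  have : x⁻¹ * y = 1 := h1
  have := inv_mul_eq_one.mp this
  exact this.symm


section VDCM
variable [LocallyCompactSpace G] [T2Space G]


variable {G : Type*} [Group G] [TopologicalSpace G] [IsTopologicalGroup G]
  [LocallyCompactSpace G] [T2Space G]

/-- Van Dantzig: a totally disconnected locally compact Hausdorff group has a basis of
identity neighbourhoods consisting of compact open subgroups. -/
lemma aux_vanDantzig [TotallyDisconnectedSpace G] {T : Set G} (hT : T ∈ 𝓝 (1 : G)) :
    ∃ H : Subgroup G, IsCompact (H : Set G) ∧ IsOpen (H : Set G) ∧ (H : Set G) ⊆ T := by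
  obtain ⟨K, hKnhds, hKT, hKcomp⟩ := local_compact_nhds hT
  -- find a clopen neighbourhood V of 1 inside interior K
  obtain ⟨V, hVclopen, h1V, hVK⟩ :=
    (loc_compact_Haus_tot_disc_of_zero_dim (H := G)).mem_nhds_iff.mp
      (isOpen_interior.mem_nhds (mem_interior_iff_mem_nhds.mpr hKnhds))
  have hVcomp : IsCompact V := hKcomp.of_isClosed_subset hVclopen.1 (hVK.trans interior_subset)
  have hVT : V ⊆ T := (hVK.trans interior_subset).trans hKT
  -- tube lemma: a symmetric open neighbourhood W of 1 with W * V ⊆ V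
  have hsub : ({1} : Set G) ×ˢ V ⊆ (fun p : G × G => p.1 * p.2) ⁻¹' V := by
    rintro ⟨a, b⟩ ⟨ha, hb⟩
    simp only [Set.mem_singleton_iff] at ha
    simpa [Set.mem_preimage, ha] using hb
  obtain ⟨u, v, huo, hvo, h1u, hVv, huv⟩ :=
    generalized_tube_lemma isCompact_singleton hVcomp
      (hVclopen.2.preimage continuous_mul) hsub
  set W : Set G := u ∩ u⁻¹ with hW
  have h1u' : (1 : G) ∈ u := h1u rfl
  have h1W : (1 : G) ∈ W := ⟨h1u', by simpa using h1u'⟩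
  have hWo : IsOpen W := huo.inter (huo.preimage continuous_inv)
  have hmul : ∀ a ∈ u, ∀ x ∈ V, a * x ∈ V := by
    intro a ha x hx
    exact huv (Set.mk_mem_prod ha (hVv hx))
  -- the subgroup generated by W is contained in V
  set H : Subgroup G := Subgroup.closure W with hH
  have key : ∀ g ∈ H, (∀ x ∈ V, g * x ∈ V) ∧ (∀ x ∈ V, g⁻¹ * x ∈ V) := by
    intro g hg
    induction hg using Subgroup.closure_induction with
    | mem a ha =>
      refine ⟨hmul a ha.1, hmul a⁻¹ ?_⟩
      simpa using ha.2
    | one => simp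
    | mul a b _ _ pa pb =>
      refine ⟨fun x hx => ?_, fun x hx => ?_⟩
      · rw [mul_assoc]; exact pa.1 _ (pb.1 _ hx)
      · rw [mul_inv_rev, mul_assoc]; exact pb.2 _ (pa.2 _ hx)
    | inv a _ pa => exact ⟨by simpa using pa.2, by simpa using pa.1⟩
  have hHV : (H : Set G) ⊆ V := fun g hg => by
    simpa using (key g hg).1 1 h1V
  have hHopen : IsOpen (H : Set G) :=
    H.isOpen_of_mem_nhds (Filter.mem_of_superset (hWo.mem_nhds h1W) Subgroup.subset_closure)
  have hHclosed : IsClosed (H : Set G) := H.isClosed_of_isOpen hHopen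
  exact ⟨H, hVcomp.of_isClosed_subset hHclosed hHV, hHopen, hHV.trans hVT⟩



/-- From a basis of compact open normal subgroups, residual discreteness. -/
lemma aux_C_to_A
    (hC : ∀ U ∈ 𝓝 (1 : G), ∃ V : Subgroup G, V.Normal ∧ IsCompact (V : Set G) ∧
      IsOpen (V : Set G) ∧ (V : Set G) ⊆ U) :
    sInf {N : Subgroup G | N.Normal ∧ IsOpen (N : Set G)} = ⊥ := by
  rw [eq_bot_iff]
  intro x hx
  rw [Subgroup.mem_sInf] at hx
  by_contra hx1
  have hne : x ≠ 1 := by simpa [Subgroup.mem_bot] using hx1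
  obtain ⟨V, hVn, _, hVo, hVsub⟩ := hC {x}ᶜ (compl_singleton_mem_nhds (Ne.symm hne))
  exact hVsub (hx V ⟨hVn, hVo⟩) rfl

/-- From a basis of compact open normal subgroups, triviality of the identity component. -/
lemma aux_C_to_component
    (hC : ∀ U ∈ 𝓝 (1 : G), ∃ V : Subgroup G, V.Normal ∧ IsCompact (V : Set G) ∧
      IsOpen (V : Set G) ∧ (V : Set G) ⊆ U) :
    connectedComponent (1 : G) = {1} := by
  apply Set.eq_singleton_iff_unique_mem.2 ⟨mem_connectedComponent, ?_⟩
  intro y hy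
  by_contra hne
  obtain ⟨V, _, _, hVo, hVsub⟩ := hC {y}ᶜ (compl_singleton_mem_nhds (Ne.symm hne))
  have hclopen : IsClopen (V : Set G) := ⟨V.isClosed_of_isOpen hVo, hVo⟩
  exact hVsub (hclopen.connectedComponent_subset (V.one_mem) hy) rfl

/-- From residual discreteness, triviality of the identity component. -/
lemma aux_A_to_component
    (hA : sInf {N : Subgroup G | N.Normal ∧ IsOpen (N : Set G)} = ⊥) :
    connectedComponent (1 : G) = {1} := by
  apply Set.eq_singleton_iff_unique_mem.2 ⟨mem_connectedComponent, ?_⟩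
  intro y hy
  have : y ∈ sInf {N : Subgroup G | N.Normal ∧ IsOpen (N : Set G)} := by
    rw [Subgroup.mem_sInf]
    rintro N ⟨-, hNo⟩
    exact IsClopen.connectedComponent_subset ⟨N.isClosed_of_isOpen hNo, hNo⟩ N.one_mem hy
  simpa [hA, Subgroup.mem_bot] using this

/-- Main direction: residual discreteness + compact generation give a basis of compact
open normal subgroups. -/
lemma aux_A_to_C (hcg : CompactlyGeneratedGroup G)
    (hA : sInf {N : Subgroup G | N.Normal ∧ IsOpen (N : Set G)} = ⊥) :
    ∀ U ∈ 𝓝 (1 : G), ∃ V : Subgroup G, V.Normal ∧ IsCompact (V : Set G) ∧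
      IsOpen (V : Set G) ∧ (V : Set G) ⊆ U := by
  haveI : TotallyDisconnectedSpace G := aux_td (aux_A_to_component hA)
  intro T hT
  -- a compact open subgroup
  obtain ⟨K, hKcomp, hKopen, -⟩ := aux_vanDantzig (G := G) Filter.univ_mem
  -- a symmetric compact generating set
  obtain ⟨S, hScomp, hSgen⟩ := hcg
  set S' : Set G := S ∪ S⁻¹ with hS'
  have hS'comp : IsCompact S' := hScomp.union (hScomp.inv)
  -- tube lemma: open v ∋ 1 with s x s⁻¹ ∈ K for all s ∈ u ⊇ S', x ∈ v
  have hsub : S' ×ˢ ({1} : Set G) ⊆ (fun p : G × G => p.1 * p.2 * p.1⁻¹) ⁻¹' (K : Set G) := by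
    rintro ⟨a, b⟩ ⟨-, hb⟩
    simp only [Set.mem_singleton_iff] at hb
    simp [Set.mem_preimage, hb, K.one_mem]
  have hcont : Continuous fun p : G × G => p.1 * p.2 * p.1⁻¹ := by fun_prop
  obtain ⟨u, v, huo, hvo, hS'u, h1v, huv⟩ :=
    generalized_tube_lemma hS'comp isCompact_singleton (hKopen.preimage hcont) hsub
  have h1v' : (1 : G) ∈ v := h1v rfl
  have hconj : ∀ s ∈ u, ∀ x ∈ v, s * x * s⁻¹ ∈ K :=
    fun s hs x hx => huv (Set.mk_mem_prod hs hx)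
  -- an open set O ∋ 1 inside v ∩ T
  obtain ⟨T', hT'sub, hT'o, h1T'⟩ := mem_nhds_iff.mp hT
  set O : Set G := v ∩ T' with hO
  have hOo : IsOpen O := hvo.inter hT'o
  have h1O : (1 : G) ∈ O := ⟨h1v', h1T'⟩
  -- compactness: find an open normal N with N ∩ K ⊆ O
  set ι := {N : Subgroup G // N.Normal ∧ IsOpen (N : Set G)} with hι
  haveI : Nonempty ι := ⟨⟨⊤, inferInstance, by simp⟩⟩
  set C : ι → Set G := fun N => (N.1 : Set G) ∩ (K : Set G) with hC
  have hCclosed : ∀ N : ι, IsClosed (C N) :=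
    fun N => (N.1.isClosed_of_isOpen N.2.2).inter (K.isClosed_of_isOpen hKopen)
  have hCcomp : ∀ N : ι, IsCompact (C N) :=
    fun N => hKcomp.of_isClosed_subset (hCclosed N) Set.inter_subset_right
  have hdir : Directed (· ⊇ ·) C := by
    rintro ⟨N₁, hN₁n, hN₁o⟩ ⟨N₂, hN₂n, hN₂o⟩
    haveI := hN₁n; haveI := hN₂n
    refine ⟨⟨N₁ ⊓ N₂, inferInstance, by rw [Subgroup.coe_inf]; exact hN₁o.inter hN₂o⟩, ?_, ?_⟩
    · intro x hx
      exact ⟨hx.1.1, hx.2⟩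
    · intro x hx
      exact ⟨hx.1.2, hx.2⟩
  have hnhds : ∀ x ∈ ⋂ N : ι, C N, O ∈ 𝓝 x := by
    intro x hx
    have hx1 : x = 1 := by
      have : x ∈ sInf {N : Subgroup G | N.Normal ∧ IsOpen (N : Set G)} := by
        rw [Subgroup.mem_sInf]
        intro N hN
        exact (Set.mem_iInter.mp hx ⟨N, hN⟩).1
      simpa [hA, Subgroup.mem_bot] using this
    rw [hx1]
    exact hOo.mem_nhds h1O
  obtain ⟨⟨N, hNn, hNo⟩, hNsub⟩ := exists_subset_nhds_of_isCompact' hdir hCcomp hCclosed hnhds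
  -- the desired subgroup
  set W : Subgroup G := N ⊓ K with hW
  have hWset : (W : Set G) = (N : Set G) ∩ (K : Set G) := rfl
  have hWsubO : (W : Set G) ⊆ O := by rw [hWset]; exact hNsub
  have hWopen : IsOpen (W : Set G) := by rw [hWset]; exact hNo.inter hKopen
  have hWclosed : IsClosed (W : Set G) := W.isClosed_of_isOpen hWopen
  have hWcomp : IsCompact (W : Set G) :=
    hKcomp.of_isClosed_subset hWclosed (hWset ▸ Set.inter_subset_right)
  -- normality: S normalizes W
  have hnorm : ∀ s ∈ S', ∀ x ∈ W, s * x * s⁻¹ ∈ W := by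
    intro s hs x hxW
    have hxv : x ∈ v := (hWsubO hxW).1
    refine ⟨hNn.conj_mem x hxW.1 s, hconj s (hS'u hs) x hxv⟩
  have hSnormalizer : S ⊆ (Subgroup.normalizer (W : Set G) : Set G) := by
    intro s hs
    rw [SetLike.mem_coe, Subgroup.mem_normalizer_iff]
    intro x
    constructor
    · exact fun hx => hnorm s (Set.mem_union_left _ hs) x hx
    · intro hx
      have hs' : s⁻¹ ∈ S' := Set.mem_union_right _ (by simpa using hs)
      have := hnorm s⁻¹ hs' _ hx
      simpa [mul_assoc] using this
  have : Subgroup.normalizer (W : Set G) = ⊤ := by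
    rw [eq_top_iff, ← hSgen]
    exact Subgroup.closure_le _ |>.mpr hSnormalizer
  exact ⟨W, Subgroup.normalizer_eq_top_iff.mp this, hWcomp, hWopen, hWsubO.trans
    (Set.inter_subset_right.trans hT'sub)⟩



/-- A totally disconnected SIN-group has a basis of compact open normal subgroups. -/
lemma aux_B_to_C (htd : TotallyDisconnectedSpace G)
    (hsin : ∀ U ∈ 𝓝 (1 : G), ∃ V ∈ 𝓝 (1 : G), V ⊆ U ∧ ∀ g : G, ∀ x ∈ V, g * x * g⁻¹ ∈ V) :
    ∀ U ∈ 𝓝 (1 : G), ∃ V : Subgroup G, V.Normal ∧ IsCompact (V : Set G) ∧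
      IsOpen (V : Set G) ∧ (V : Set G) ⊆ U := by
  haveI := htd
  intro U hU
  obtain ⟨K, hKcomp, hKopen, hKU⟩ := aux_vanDantzig hU
  obtain ⟨V, hVnhds, hVK, hVconj⟩ := hsin (K : Set G) (hKopen.mem_nhds K.one_mem)
  set N : Subgroup G := K.normalCore with hN
  have hVN : V ⊆ (N : Set G) := by
    intro x hx
    intro b
    exact hVK (hVconj b x hx)
  have hNopen : IsOpen (N : Set G) :=
    N.isOpen_of_mem_nhds (Filter.mem_of_superset hVnhds hVN)
  have hNK : (N : Set G) ⊆ (K : Set G) := fun x hx => K.normalCore_le hx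
  have hNclosed : IsClosed (N : Set G) := N.isClosed_of_isOpen hNopen
  exact ⟨N, K.normalCore_normal, hKcomp.of_isClosed_subset hNclosed hNK, hNopen,
    hNK.trans hKU⟩


/-- From a basis of compact open normal subgroups, the SIN property. -/
lemma aux_C_to_SIN
    (hC : ∀ U ∈ 𝓝 (1 : G), ∃ V : Subgroup G, V.Normal ∧ IsCompact (V : Set G) ∧
      IsOpen (V : Set G) ∧ (V : Set G) ⊆ U) :
    ∀ U ∈ 𝓝 (1 : G), ∃ V ∈ 𝓝 (1 : G), V ⊆ U ∧ ∀ g : G, ∀ x ∈ V, g * x * g⁻¹ ∈ V := by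
  intro U hU
  obtain ⟨V, hVn, _, hVo, hVU⟩ := hC U hU
  exact ⟨V, hVo.mem_nhds V.one_mem, hVU, fun g x hx => hVn.conj_mem x hx g⟩

end VDCM

end AuxCM

/-- **Corollary (Caprace–Monod, residually discrete groups).** For a compactly
generated locally compact Hausdorff group `G`, the following are equivalent:
(i) `G` is residually discrete; (ii) `G` is a totally disconnected SIN-group;
(iii) the compact open normal subgroups of `G` form a basis of identity
neighbourhoods. -/
theorem residually_discrete_tfae (G : Type*) [Group G] [TopologicalSpace G]
    [IsTopologicalGroup G] [LocallyCompactSpace G] [T2Space G]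
    (hcg : CompactlyGeneratedGroup G) :
    (sInf {N : Subgroup G | N.Normal ∧ IsOpen (N : Set G)} = ⊥ ↔
      (TotallyDisconnectedSpace G ∧
        ∀ U ∈ nhds (1 : G), ∃ V ∈ nhds (1 : G), V ⊆ U ∧
          ∀ g : G, ∀ x ∈ V, g * x * g⁻¹ ∈ V)) ∧
    (sInf {N : Subgroup G | N.Normal ∧ IsOpen (N : Set G)} = ⊥ ↔
      (∀ U ∈ nhds (1 : G), ∃ V : Subgroup G, V.Normal ∧ IsCompact (V : Set G) ∧
        IsOpen (V : Set G) ∧ (V : Set G) ⊆ U)) := by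
  have hmain := aux_A_to_C hcg
  constructor
  · constructor
    · intro hA
      exact ⟨aux_td (aux_A_to_component hA), aux_C_to_SIN (hmain hA)⟩
    · rintro ⟨htd, hsin⟩
      exact aux_C_to_A (aux_B_to_C htd hsin)
  · exact ⟨fun hA => hmain hA, fun hC => aux_C_to_A hC⟩
end

section
/- Let A be a Hausdorff topological group containing p normal subgroups L_1, …, L_p, each dense in A, such that the intersection L_1 ∩ ⋯ ∩ L_p is trivial. Then A is nilpotent of nilpotency class at most p − 1. -/
open scoped Pointwise Topology

theorem ucs_isClosed (A : Type*) [Group A] [TopologicalSpace A] [IsTopologicalGroup A]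
    [T1Space A] (n : ℕ) : IsClosed ((upperCentralSeries A n : Subgroup A) : Set A) := by
  induction n with
  | zero =>
      have : ((upperCentralSeries A 0 : Subgroup A) : Set A) = {(1 : A)} := by
        exact (show ((Subgroup.upperCentralSeries A 0 : Subgroup A) : Set A) = {(1 : A)} by simp)
      rw [this]; exact isClosed_singleton
  | succ n ih =>
      have : ((upperCentralSeries A (n + 1) : Subgroup A) : Set A)
          = ⋂ y : A, (fun x : A => x * y * x⁻¹ * y⁻¹) ⁻¹'
              ((upperCentralSeries A n : Subgroup A) : Set A) := by
        ext x
        simp only [Set.mem_iInter, Set.mem_preimage, SetLike.mem_coe]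
        exact mem_upperCentralSeries_succ_iff
      rw [this]
      exact isClosed_iInter fun y => ih.preimage (by continuity)

/-- **Lemma (Caprace–Monod).** Let `A` be a Hausdorff topological group containing
`p` dense normal subgroups `L 0, …, L (p-1)` with trivial intersection. Then
`A` is nilpotent of class at most `p - 1`: its upper central series reaches `A`
after at most `p - 1` steps. -/
theorem nilpotent_of_dense_normal_subgroups (A : Type*) [Group A]
    [TopologicalSpace A] [IsTopologicalGroup A] [T2Space A]
    (p : ℕ) (hp : 0 < p) (L : Fin p → Subgroup A)
    (hnorm : ∀ i, (L i).Normal)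
    (hdense : ∀ i, Dense ((L i : Subgroup A) : Set A))
    (hint : ⨅ i, L i = ⊥) :
    upperCentralSeries A (p - 1) = ⊤ := by
  have key : ∀ k, k ≤ p - 1 → ∀ m : A, (∀ i : Fin p, (i : ℕ) < p - k → m ∈ L i) →
      m ∈ upperCentralSeries A k := by
    intro k
    induction k with
    | zero =>
        intro _ m hm
        have : m ∈ ⨅ i, L i := Subgroup.mem_iInf.2 fun i => hm i (by omega)
        exact (show m ∈ Subgroup.upperCentralSeries A 0 by simpa [hint] using this)
    | succ k ih =>
        intro hk m hm
        have hk' : k ≤ p - 1 := by omega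
        set j : Fin p := ⟨p - k - 1, by omega⟩ with hj
        have hcomm : ∀ l ∈ L j, m * l * m⁻¹ * l⁻¹ ∈ upperCentralSeries A k := by
          intro l hl
          refine ih hk' _ (fun i hi => ?_)
          rcases Nat.lt_or_ge (i : ℕ) (p - (k + 1)) with h | h
          · have hmLi := hm i h
            have h1 : l * m⁻¹ * l⁻¹ ∈ L i := (hnorm i).conj_mem m⁻¹ (inv_mem hmLi) l
            have := mul_mem hmLi h1
            simpa [mul_assoc] using this
          · have hij : i = j := Fin.ext (by simp only [hj, Fin.val_mk]; omega)
            rw [hij]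
            have h1 : m * l * m⁻¹ ∈ L j := (hnorm j).conj_mem l hl m
            exact mul_mem h1 (inv_mem hl)
        refine Subgroup.mem_upperCentralSeries_succ_iff.2 ?_
        intro y
        have hclosed : IsClosed ((fun x : A => m * x * m⁻¹ * x⁻¹) ⁻¹'
            ((upperCentralSeries A k : Subgroup A) : Set A)) :=
          (ucs_isClosed A k).preimage (by continuity)
        have hsub : ((L j : Subgroup A) : Set A) ⊆
            (fun x : A => m * x * m⁻¹ * x⁻¹) ⁻¹'
              ((upperCentralSeries A k : Subgroup A) : Set A) := fun l hl => hcomm l hl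
        have hdns : Dense ((fun x : A => m * x * m⁻¹ * x⁻¹) ⁻¹'
            ((upperCentralSeries A k : Subgroup A) : Set A)) := (hdense j).mono hsub
        have : (fun x : A => m * x * m⁻¹ * x⁻¹) ⁻¹'
            ((upperCentralSeries A k : Subgroup A) : Set A) = Set.univ := by
          rw [← hclosed.closure_eq, hdns.closure_eq]
        exact (Set.eq_univ_iff_forall.1 this) y
  have h0 : ((L ⟨0, hp⟩ : Subgroup A) : Set A) ⊆
      ((upperCentralSeries A (p - 1) : Subgroup A) : Set A) := by
    intro m hm
    refine key (p - 1) le_rfl m (fun i hi => ?_)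
    have : i = ⟨0, hp⟩ := Fin.ext (by simp only [Fin.val_mk]; omega)
    rw [this]; exact hm
  have hdns : Dense ((upperCentralSeries A (p - 1) : Subgroup A) : Set A) :=
    (hdense ⟨0, hp⟩).mono h0
  have := (ucs_isClosed A (p - 1)).closure_eq
  rw [hdns.closure_eq] at this
  exact SetLike.coe_injective (by rw [← this, Subgroup.coe_top])
end
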